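/- Let p₁ < p₂ be the two smallest prime factors of a square-free odd integer n with at least two prime factors. The set E = (T_{p₁} ∪ T_{p₂}) \ {1}, consisting of all p₁-th and p₂-th roots of unity other than 1, is not quasi-independent, and #E = p₁ + p₂ − 2. -/

import Mathlib

def QuasiIndep (S : Set ℂ) : Prop :=
  ∀ (s : Finset ℂ) (ε : ℂ → ℤ), ↑s ⊆ S →
    (∀ z ∈ s, ε z = 0 ∨ ε z = 1 ∨ ε z = -1) →
    (∑ z ∈ s, (ε z : ℂ) * z) = 0 → ∀ z ∈ s, ε z = 0

open Polynomial Finset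

lemma sum_nthRootsFinset_complex {p : ℕ} (hp : 1 < p) :
    ∑ z ∈ nthRootsFinset p (1 : ℂ), z = 0 := by
  obtain ⟨ζ, hζ⟩ : ∃ ζ : ℂ, IsPrimitiveRoot ζ p :=
    ⟨_, Complex.isPrimitiveRoot_exp p (by omega)⟩
  have h := hζ.nthRoots_eq (one_pow p)
  have hgs := hζ.geom_sum_eq_zero hp
  have hval : (nthRootsFinset p (1 : ℂ)).1 = nthRoots p 1 := by
    rw [nthRootsFinset_def, Multiset.toFinset_val,
      Multiset.dedup_eq_self.mpr (hζ.nthRoots_one_nodup)]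
  show ((nthRootsFinset p (1 : ℂ)).1.map id).sum = 0
  rw [hval, h, Multiset.map_map]
  have hgs' : ((Multiset.range p).map (fun i => ζ ^ i)).sum = 0 := hgs
  simpa using hgs'

theorem stmt_8 (n p₁ p₂ : ℕ) (hsf : Squarefree n) (hodd : Odd n)
    (hp₁ : p₁.Prime) (hp₂ : p₂.Prime) (h₁n : p₁ ∣ n) (h₂n : p₂ ∣ n) (hlt : p₁ < p₂)
    (hmin₁ : ∀ r : ℕ, r.Prime → r ∣ n → p₁ ≤ r)
    (hmin₂ : ∀ r : ℕ, r.Prime → r ∣ n → r ≠ p₁ → p₂ ≤ r)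
    (E : Set ℂ)
    (hE : E = ({z : ℂ | z ^ p₁ = 1} ∪ {z : ℂ | z ^ p₂ = 1}) \ {1}) :
    ¬ QuasiIndep E ∧ E.ncard = p₁ + p₂ - 2 := by
  have hp₁1 : 1 < p₁ := hp₁.one_lt
  have hp₂1 : 1 < p₂ := hp₂.one_lt
  set F₁ : Finset ℂ := (nthRootsFinset p₁ (1 : ℂ)).erase 1 with hF₁
  set F₂ : Finset ℂ := (nthRootsFinset p₂ (1 : ℂ)).erase 1 with hF₂
  have hcop : Nat.Coprime p₁ p₂ := (Nat.coprime_primes hp₁ hp₂).mpr hlt.ne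
  -- disjointness
  have hdisj : Disjoint F₁ F₂ := by
    rw [Finset.disjoint_left]
    intro z hz₁ hz₂
    rw [hF₁, Finset.mem_erase, mem_nthRootsFinset (by omega)] at hz₁
    rw [hF₂, Finset.mem_erase, mem_nthRootsFinset (by omega)] at hz₂
    have h1 : orderOf z ∣ p₁ := orderOf_dvd_of_pow_eq_one hz₁.2
    have h2 : orderOf z ∣ p₂ := orderOf_dvd_of_pow_eq_one hz₂.2
    have : orderOf z ∣ 1 := hcop ▸ Nat.dvd_gcd h1 h2
    exact hz₁.1 (orderOf_eq_one_iff.mp (Nat.dvd_one.mp this))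
  have h1mem₁ : (1 : ℂ) ∈ nthRootsFinset p₁ (1 : ℂ) := by
    rw [mem_nthRootsFinset (by omega)]; exact one_pow _
  have h1mem₂ : (1 : ℂ) ∈ nthRootsFinset p₂ (1 : ℂ) := by
    rw [mem_nthRootsFinset (by omega)]; exact one_pow _
  have hsum₁ : ∑ z ∈ F₁, z = -1 := by
    have h := Finset.add_sum_erase (nthRootsFinset p₁ (1 : ℂ)) id h1mem₁
    simp only [id] at h
    rw [sum_nthRootsFinset_complex hp₁1] at h
    rw [hF₁]; linear_combination h
  have hsum₂ : ∑ z ∈ F₂, z = -1 := by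
    have h := Finset.add_sum_erase (nthRootsFinset p₂ (1 : ℂ)) id h1mem₂
    simp only [id] at h
    rw [sum_nthRootsFinset_complex hp₂1] at h
    rw [hF₂]; linear_combination h
  -- E equals the union
  have hEeq : E = ↑(F₁ ∪ F₂) := by
    rw [hE]
    ext z
    simp only [Finset.coe_union, Set.mem_union, Set.mem_diff, Set.mem_singleton_iff,
      Set.mem_setOf_eq, Finset.mem_coe, hF₁, hF₂, Finset.mem_erase,
      mem_nthRootsFinset (show 0 < p₁ by omega), mem_nthRootsFinset (show 0 < p₂ by omega)]
    tauto
  constructor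
  · intro hQI
    classical
    set ε : ℂ → ℤ := fun z => if z ∈ F₁ then 1 else if z ∈ F₂ then -1 else 0 with hε
    obtain ⟨ζ, hζ⟩ : ∃ ζ : ℂ, IsPrimitiveRoot ζ p₁ :=
      ⟨_, Complex.isPrimitiveRoot_exp p₁ (by omega)⟩
    have hζmem : ζ ∈ F₁ := by
      rw [hF₁, Finset.mem_erase]
      exact ⟨hζ.ne_one hp₁1, hζ.mem_nthRootsFinset (by omega)⟩
    have hζs : ζ ∈ F₁ ∪ F₂ := Finset.mem_union_left _ hζmem
    have := hQI (F₁ ∪ F₂) ε (by rw [hEeq]) (by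
      intro z hz
      by_cases h1 : z ∈ F₁ <;> by_cases h2 : z ∈ F₂ <;> simp [hε, h1, h2])
      (by
        rw [Finset.sum_union hdisj]
        have e₁ : ∀ z ∈ F₁, ((ε z : ℂ)) * z = z := by
          intro z hz; simp [hε, hz]
        have e₂ : ∀ z ∈ F₂, ((ε z : ℂ)) * z = -z := by
          intro z hz
          have : z ∉ F₁ := Finset.disjoint_right.mp hdisj hz
          simp [hε, hz, this]
        rw [Finset.sum_congr rfl e₁, Finset.sum_congr rfl e₂, hsum₁,
          Finset.sum_neg_distrib, hsum₂]
        ring) ζ hζs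
    rw [hε] at this
    simp [hζmem] at this
  · have hc₁ : (nthRootsFinset p₁ (1 : ℂ)).card = p₁ :=
      (Complex.isPrimitiveRoot_exp p₁ (by omega)).card_nthRootsFinset
    have hc₂ : (nthRootsFinset p₂ (1 : ℂ)).card = p₂ :=
      (Complex.isPrimitiveRoot_exp p₂ (by omega)).card_nthRootsFinset
    rw [hEeq, Set.ncard_coe_finset, Finset.card_union_of_disjoint hdisj, hF₁, hF₂,
      Finset.card_erase_of_mem h1mem₁, Finset.card_erase_of_mem h1mem₂, hc₁, hc₂]
    omega
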